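/- Let d ≥ 2 and let ε be any function from the set of multi-indices of degree d−1 in three variables to {+1, −1}. For a multi-index A of degree d, say A ∈ T⁰ if all three components of A are positive and ε is not constant on {A−e₁, A−e₂, A−e₃}; say A ∈ E⁰ if exactly one component of A is zero and, writing j, k for the two indices with positive components, ε(A−eⱼ) ≠ ε(A−eₖ). Then |E⁰| + 2·|T⁰| ≤ d² − d. -/

import Mathlib

open MvPolynomial

namespace LPAux
open Finset

noncomputable def e (j : Fin 3) : Fin 3 →₀ ℕ := Finsupp.single j 1

@[simp] lemma e_def (j : Fin 3) : e j = Finsupp.single j 1 := rfl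

def pairs : Finset (Fin 3 × Fin 3) := {(0,1),(0,2),(1,2)}

lemma deg_eq (f : Fin 3 →₀ ℕ) : f.degree = f 0 + f 1 + f 2 := by
  rw [Finsupp.degree_apply, Finset.sum_subset (Finset.subset_univ f.support)
    (fun i _ h => Finsupp.notMem_support_iff.mp h), Fin.sum_univ_three]

lemma pairs_ne : ∀ p ∈ pairs, p.1 ≠ p.2 := by decide

lemma pairs_card : pairs.card = 3 := by decide

lemma mem_pairs_or : ∀ j k : Fin 3, j ≠ k → (j,k) ∈ pairs ∨ (k,j) ∈ pairs := by decide

lemma sub_add (A : Fin 3 →₀ ℕ) {j k : Fin 3} (hjk : j ≠ k) (hj : 0 < A j) (hk : 0 < A k) :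
    A - e j - e k + e j = A - e k ∧ A - e j - e k + e k = A - e j ∧
      A - e j - e k + e j + e k = A := by
  refine ⟨?_, ?_, ?_⟩
  all_goals ext i
  all_goals simp only [Finsupp.add_apply, Finsupp.tsub_apply, e, Finsupp.single_apply]
  all_goals by_cases h1 : j = i <;> by_cases h2 : k = i <;> simp_all <;> omega

lemma sum_sub2 (A : Fin 3 →₀ ℕ) {j k : Fin 3} (hjk : j ≠ k) (hj : 0 < A j) (hk : 0 < A k) :
    (A - e j - e k) 0 + (A - e j - e k) 1 + (A - e j - e k) 2 + 2 = A 0 + A 1 + A 2 := by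
  simp only [Finsupp.tsub_apply, e, Finsupp.single_apply]
  fin_cases j <;> fin_cases k <;> simp_all <;> omega

lemma deg_sub1 (A : Fin 3 →₀ ℕ) {j : Fin 3} (hj : 0 < A j) :
    (A - e j).degree + 1 = A.degree := by
  rw [deg_eq, deg_eq]
  simp only [Finsupp.tsub_apply, e, Finsupp.single_apply]
  fin_cases j <;> simp_all <;> omega

lemma sum_add_e (b : Fin 3 →₀ ℕ) (j : Fin 3) :
    (b + e j) 0 + (b + e j) 1 + (b + e j) 2 = b 0 + b 1 + b 2 + 1 := by
  simp only [Finsupp.add_apply, e, Finsupp.single_apply]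
  fin_cases j <;> simp <;> omega

lemma mk3_apply0 (x y z : ℕ) :
    (Finsupp.single (0 : Fin 3) x + Finsupp.single 1 y + Finsupp.single 2 z : Fin 3 →₀ ℕ) 0
      = x := by
  simp [Finsupp.single_apply]

lemma mk3_apply1 (x y z : ℕ) :
    (Finsupp.single (0 : Fin 3) x + Finsupp.single 1 y + Finsupp.single 2 z : Fin 3 →₀ ℕ) 1
      = y := by
  simp [Finsupp.single_apply]

lemma mk3_apply2 (x y z : ℕ) :
    (Finsupp.single (0 : Fin 3) x + Finsupp.single 1 y + Finsupp.single 2 z : Fin 3 →₀ ℕ) 2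
      = z := by
  simp [Finsupp.single_apply]

lemma ext3 {f g : Fin 3 →₀ ℕ} (h0 : f 0 = g 0) (h1 : f 1 = g 1) (h2 : f 2 = g 2) : f = g := by
  ext i; fin_cases i <;> assumption

end LPAux

open LPAux Finset

/-- **The counting inequality `|E⁰| + 2|T⁰| ≤ d² − d`** from the proof of the
Lebl–Peters rank theorem.  Here `ε` assigns a sign `±1` to each multi-index of
degree `d−1` in three variables; `T⁰` consists of the degree-`d` multi-indices
`A` with all components positive on which `ε(A−e·)` is not constant, and `E⁰`
of those with exactly one zero component whose two admissible signs
`ε(A−eⱼ)`, `ε(A−eₖ)` differ. -/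
theorem sign_change_count_bound
    {d : ℕ} (hd : 2 ≤ d)
    (ε : (Fin 3 →₀ ℕ) → ℤ)
    (hε : ∀ a : Fin 3 →₀ ℕ, a.degree = d - 1 → ε a = 1 ∨ ε a = -1) :
    ({A : Fin 3 →₀ ℕ | A.degree = d ∧ (∃! i, A i = 0) ∧
        ∃ j k : Fin 3, j ≠ k ∧ 0 < A j ∧ 0 < A k ∧
          ε (A - Finsupp.single j 1) ≠ ε (A - Finsupp.single k 1)}).ncard
      + 2 * ({A : Fin 3 →₀ ℕ | A.degree = d ∧ (∀ i, 0 < A i) ∧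
          ∃ i j : Fin 3,
            ε (A - Finsupp.single i 1) ≠ ε (A - Finsupp.single j 1)}).ncard
      ≤ d ^ 2 - d := by
  classical
  obtain ⟨D, rfl⟩ : ∃ D, d = D + 2 := ⟨d - 2, by omega⟩
  clear hd
  -- the degree `D` multi-indices
  set B : Finset (Fin 3 →₀ ℕ) := Finset.finsuppAntidiag Finset.univ D with hBdef
  have memB : ∀ b : Fin 3 →₀ ℕ, b ∈ B ↔ b 0 + b 1 + b 2 = D := by
    intro b
    rw [hBdef, Finset.mem_finsuppAntidiag]
    simp [Fin.sum_univ_three]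
  -- the sigma finset of divided Koszul relations
  set S : Finset (Σ _ : Fin 3 →₀ ℕ, Fin 3 × Fin 3) :=
    B.sigma (fun b => pairs.filter (fun p => ε (b + e p.1) ≠ ε (b + e p.2))) with hSdef
  set F : (Σ _ : Fin 3 →₀ ℕ, Fin 3 × Fin 3) → (Fin 3 →₀ ℕ) :=
    fun x => x.1 + e x.2.1 + e x.2.2 with hFdef
  -- signs are ±1 on degree D+1 indices
  have hεb : ∀ b ∈ B, ∀ j : Fin 3, ε (b + e j) = 1 ∨ ε (b + e j) = -1 := by
    intro b hb j
    apply hε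
    rw [deg_eq, sum_add_e, (memB b).1 hb]
    omega
  -- fiber membership helper
  have mem_fiber : ∀ A : Fin 3 →₀ ℕ, A 0 + A 1 + A 2 = D + 2 → ∀ j k : Fin 3,
      (j,k) ∈ pairs → 0 < A j → 0 < A k → ε (A - e j) ≠ ε (A - e k) →
      (⟨A - e j - e k, (j,k)⟩ : Σ _ : Fin 3 →₀ ℕ, Fin 3 × Fin 3)
        ∈ S.filter (fun x => F x = A) := by
    intro A hA j k hp hj hk hne
    have hjk : j ≠ k := pairs_ne _ hp
    obtain ⟨h1, h2, h3⟩ := sub_add A hjk hj hk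
    have hsum := sum_sub2 A hjk hj hk
    have hb' : A - e j - e k ∈ B := (memB (A - e j - e k)).2 (by omega)
    have hpair' : (j, k) ∈ pairs.filter
        (fun p => ε ((A - e j - e k) + e p.1) ≠ ε ((A - e j - e k) + e p.2)) := by
      refine Finset.mem_filter.2 ⟨hp, ?_⟩
      show ε (A - e j - e k + e j) ≠ ε (A - e j - e k + e k)
      rw [h1, h2]; exact hne.symm
    have hF' : F ⟨A - e j - e k, (j, k)⟩ = A := h3
    exact Finset.mem_filter.2 ⟨Finset.mem_sigma.2 ⟨hb', hpair'⟩, hF'⟩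
  -- the two finsets
  set Ad : Finset (Fin 3 →₀ ℕ) := Finset.finsuppAntidiag Finset.univ (D + 2) with hAdDef
  have memAd : ∀ A : Fin 3 →₀ ℕ, A ∈ Ad ↔ A.degree = D + 2 := by
    intro A
    rw [hAdDef, Finset.mem_finsuppAntidiag, deg_eq]
    simp [Fin.sum_univ_three]
  set Efin : Finset (Fin 3 →₀ ℕ) := Ad.filter (fun A => (∃! i, A i = 0) ∧
      ∃ j k : Fin 3, j ≠ k ∧ 0 < A j ∧ 0 < A k ∧
        ε (A - Finsupp.single j 1) ≠ ε (A - Finsupp.single k 1)) with hEdef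
  set Tfin : Finset (Fin 3 →₀ ℕ) := Ad.filter (fun A => (∀ i, 0 < A i) ∧
      ∃ i j : Fin 3, ε (A - Finsupp.single i 1) ≠ ε (A - Finsupp.single j 1)) with hTdef
  -- rewrite the ncards
  have hEset : {A : Fin 3 →₀ ℕ | A.degree = D + 2 ∧ (∃! i, A i = 0) ∧
        ∃ j k : Fin 3, j ≠ k ∧ 0 < A j ∧ 0 < A k ∧
          ε (A - Finsupp.single j 1) ≠ ε (A - Finsupp.single k 1)} = ↑Efin := by
    ext A
    simp only [Set.mem_setOf_eq, hEdef, Finset.coe_filter, memAd]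
  have hTset : {A : Fin 3 →₀ ℕ | A.degree = D + 2 ∧ (∀ i, 0 < A i) ∧
        ∃ i j : Fin 3, ε (A - Finsupp.single i 1) ≠ ε (A - Finsupp.single j 1)} = ↑Tfin := by
    ext A
    simp only [Set.mem_setOf_eq, hTdef, Finset.coe_filter, memAd]
  rw [hEset, hTset, Set.ncard_coe_finset, Set.ncard_coe_finset]
  -- disjointness
  have hdisj : Disjoint Efin Tfin := by
    rw [Finset.disjoint_left]
    intro A hAE hAT
    obtain ⟨-, ⟨i, hi, -⟩, -⟩ := Finset.mem_filter.1 hAE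
    obtain ⟨-, hpos, -⟩ := Finset.mem_filter.1 hAT
    exact absurd hi (hpos i).ne'
  -- weights
  set w : (Fin 3 →₀ ℕ) → ℕ := fun A => if ∀ i, 0 < A i then 2 else 1 with hwdef
  -- the key fiber bound
  have key : ∀ A ∈ Efin ∪ Tfin, w A ≤ (S.filter (fun x => F x = A)).card := by
    intro A hA
    rcases Finset.mem_union.1 hA with hA | hA
    · obtain ⟨hAd, hz, j, k, hjk, hj, hk, hne⟩ := Finset.mem_filter.1 hA
      obtain ⟨i, hi, -⟩ := hz
      have hw : w A = 1 := if_neg (fun h => absurd hi (h i).ne')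
      have hsum : A 0 + A 1 + A 2 = D + 2 := by
        have := (memAd A).1 hAd; rwa [deg_eq] at this
      rw [hw]
      rw [Nat.succ_le_iff, Finset.card_pos]
      rcases mem_pairs_or j k hjk with hp | hp
      · exact ⟨_, mem_fiber A hsum j k hp hj hk hne⟩
      · exact ⟨_, mem_fiber A hsum k j hp hk hj hne.symm⟩
    · obtain ⟨hAd, hpos, i, j, hneij⟩ := Finset.mem_filter.1 hA
      have hw : w A = 2 := if_pos hpos
      have hsum : A 0 + A 1 + A 2 = D + 2 := by
        have := (memAd A).1 hAd; rwa [deg_eq] at this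
      -- find two distinct sign-changing pairs
      have hna : ¬ (ε (A - e 0) = ε (A - e 1) ∧ ε (A - e 1) = ε (A - e 2)) := by
        rintro ⟨ha, hb⟩
        apply hneij
        have hall : ∀ l : Fin 3, ε (A - e l) = ε (A - e 0) := by
          intro l
          fin_cases l
          · rfl
          · exact ha.symm
          · exact (ha.trans hb).symm
        show ε (A - e i) = ε (A - e j)
        rw [hall i, hall j]
      have hne2 : ∃ p q : Fin 3 × Fin 3, p ∈ pairs ∧ q ∈ pairs ∧ p ≠ q ∧
          ε (A - e p.1) ≠ ε (A - e p.2) ∧ ε (A - e q.1) ≠ ε (A - e q.2) := by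
        by_cases h01 : ε (A - e 0) = ε (A - e 1)
        · have h12 : ε (A - e 1) ≠ ε (A - e 2) := fun h => hna ⟨h01, h⟩
          have h02 : ε (A - e 0) ≠ ε (A - e 2) := fun h => h12 (h01.symm.trans h)
          exact ⟨(0,2), (1,2), by decide, by decide, by decide, h02, h12⟩
        · by_cases h02 : ε (A - e 0) = ε (A - e 2)
          · have h12 : ε (A - e 1) ≠ ε (A - e 2) := fun h => h01 (h02.trans h.symm)
            exact ⟨(0,1), (1,2), by decide, by decide, by decide, h01, h12⟩
          · exact ⟨(0,1), (0,2), by decide, by decide, by decide, h01, h02⟩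
      obtain ⟨p, q, hp, hq, hpq, hnp, hnq⟩ := hne2
      have hx : (⟨A - e p.1 - e p.2, (p.1, p.2)⟩ : Σ _ : Fin 3 →₀ ℕ, Fin 3 × Fin 3)
          ∈ S.filter (fun x => F x = A) :=
        mem_fiber A hsum p.1 p.2 (by rwa [Prod.mk.eta]) (hpos _) (hpos _) hnp
      have hy : (⟨A - e q.1 - e q.2, (q.1, q.2)⟩ : Σ _ : Fin 3 →₀ ℕ, Fin 3 × Fin 3)
          ∈ S.filter (fun x => F x = A) :=
        mem_fiber A hsum q.1 q.2 (by rwa [Prod.mk.eta]) (hpos _) (hpos _) hnq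
      rw [hw]
      refine Finset.one_lt_card_iff.2 ⟨_, _, hx, hy, ?_⟩
      intro h
      have h2 := congrArg Sigma.snd h
      dsimp only at h2
      rw [Prod.mk.eta, Prod.mk.eta] at h2
      exact hpq h2
  -- the union maps into the image
  have hUV : Efin ∪ Tfin ⊆ S.image F := by
    intro A hA
    have h1 : 1 ≤ w A := by rw [hwdef]; dsimp only; split <;> omega
    obtain ⟨x, hx⟩ := Finset.card_pos.1 (le_trans h1 (key A hA))
    obtain ⟨hxS, hxF⟩ := Finset.mem_filter.1 hx
    exact Finset.mem_image.2 ⟨x, hxS, hxF⟩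
  -- count via fibers
  have step1 : Efin.card + 2 * Tfin.card ≤ S.card := by
    have e1 : ∑ A ∈ Efin, w A = Efin.card := by
      rw [Finset.sum_congr rfl (fun A hA => show w A = 1 from if_neg ?_), Finset.sum_const,
        smul_eq_mul, mul_one]
      obtain ⟨-, ⟨i, hi, -⟩, -⟩ := Finset.mem_filter.1 hA
      exact fun h => absurd hi (h i).ne'
    have e2 : ∑ A ∈ Tfin, w A = 2 * Tfin.card := by
      rw [Finset.sum_congr rfl (fun A hA => show w A = 2 from
          if_pos (Finset.mem_filter.1 hA).2.1), Finset.sum_const, smul_eq_mul, mul_comm]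
    calc Efin.card + 2 * Tfin.card = ∑ A ∈ Efin ∪ Tfin, w A := by
          rw [Finset.sum_union hdisj, e1, e2]
      _ ≤ ∑ A ∈ Efin ∪ Tfin, (S.filter (fun x => F x = A)).card := Finset.sum_le_sum key
      _ ≤ ∑ A ∈ S.image F, (S.filter (fun x => F x = A)).card :=
          Finset.sum_le_sum_of_subset hUV
      _ = S.card := (Finset.card_eq_sum_card_fiberwise
            (fun x hx => Finset.mem_image_of_mem F hx)).symm
  -- bound on S
  have step2 : S.card ≤ B.card * 2 := by
    rw [hSdef, Finset.card_sigma]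
    refine le_trans (Finset.sum_le_card_nsmul _ _ 2 ?_) (by simp [mul_comm])
    intro b hb
    by_contra hcon
    push_neg at hcon
    have heq : pairs.filter (fun p => ε (b + e p.1) ≠ ε (b + e p.2)) = pairs :=
      Finset.eq_of_subset_of_card_le (Finset.filter_subset _ _) (by rw [pairs_card]; omega)
    have m01 := Finset.mem_filter.1 (heq ▸ (by decide : ((0,1) : Fin 3 × Fin 3) ∈ pairs))
    have m02 := Finset.mem_filter.1 (heq ▸ (by decide : ((0,2) : Fin 3 × Fin 3) ∈ pairs))
    have m12 := Finset.mem_filter.1 (heq ▸ (by decide : ((1,2) : Fin 3 × Fin 3) ∈ pairs))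
    have c01 := m01.2
    have c02 := m02.2
    have c12 := m12.2
    dsimp only at c01 c02 c12
    rcases hεb b hb 0 with h0 | h0 <;> rcases hεb b hb 1 with h1 | h1 <;>
      rcases hεb b hb 2 with h2 | h2 <;> omega
  -- cardinality of B
  have step3 : B.card * 2 = (D + 2) ^ 2 - (D + 2) := by
    have hcard : B.card = ((Finset.range (D+1)).sigma fun x => Finset.range (D+1-x)).card := by
      refine Finset.card_nbij' (fun b => ⟨b 0, b 1⟩)
        (fun x => Finsupp.single 0 x.1 + Finsupp.single 1 x.2 +
          Finsupp.single 2 (D - x.1 - x.2)) ?_ ?_ ?_ ?_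
      · intro b hb
        have := (memB b).1 hb
        simp only [Finset.mem_coe, Finset.mem_sigma, Finset.mem_range]
        omega
      · intro x hx
        simp only [Finset.mem_coe, Finset.mem_sigma, Finset.mem_range] at hx
        rw [Finset.mem_coe, memB, mk3_apply0, mk3_apply1, mk3_apply2]
        omega
      · intro b hb
        have hs := (memB b).1 hb
        dsimp only
        refine ext3 ?_ ?_ ?_
        · exact mk3_apply0 _ _ _
        · exact mk3_apply1 _ _ _
        · rw [mk3_apply2]; omega
      · intro x hx
        obtain ⟨x1, x2⟩ := x
        simp only [mk3_apply0, mk3_apply1]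
    rw [hcard, Finset.card_sigma]
    simp only [Finset.card_range]
    have r1 : ∑ x ∈ Finset.range (D+1), (D+1-x) = ∑ x ∈ Finset.range (D+1), (x+1) := by
      rw [← Finset.sum_range_reflect (fun x => x + 1) (D+1)]
      refine Finset.sum_congr rfl fun x hx => ?_
      have := Finset.mem_range.1 hx
      omega
    have r2 : ∑ x ∈ Finset.range (D+2), x = ∑ x ∈ Finset.range (D+1), (x+1) := by
      rw [Finset.sum_range_succ' (fun x => x) (D+1)]
      omega
    have r3 := Finset.sum_range_id_mul_two (D+2)
    have r4 : (D+2) * (D+2-1) = (D+2) * (D+1) := by norm_num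
    have r5 : (D+2)^2 = (D+2) * (D+1) + (D+2) := by ring
    omega
  omega
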